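/- arXiv:1902.05478 — 3 statements merged into one kernel-verified Lean document; each statement's English description precedes it below -/
import Mathlib

section
/- (Quaternionic instance of the main stability theorem, case (b).) Let D ⊆ ℍ, let S ⊆ ℍ be a finite set, and let f : ℍ → ℍ satisfy f(q) ∈ S for all q ∈ D and the B-projection property: Re(star(f(q)) * q) > Re(star(s) * q) for every q ∈ D and every s ∈ S with s ≠ f(q). Let N ≥ 1 and let (w_ij) be an N×N quaternion matrix with w_ij = star(w_ji) for all i, j, and with each diagonal entry w_ii a nonnegative real number. Then for every update schedule σ : ℕ → {1,…,N} and every initial state x(0) ∈ S^N, the asynchronous Hopfield trajectory defined by x_i(t+1) = f(v_i(t)) if i = σ(t) and v_i(t) ∈ D, and x_i(t+1) = x_i(t) otherwise, where v_i(t) = Σⱼ w_ij * x_j(t), is eventually constant: there exists T such that x(t) = x(T) for all t ≥ T. -/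
open Quaternion Finset

private def quatRe : Quaternion ℝ →+ ℝ :=
  { toFun := QuaternionAlgebra.re, map_zero' := rfl, map_add' := fun _ _ => rfl }

private lemma re_sum {α : Type*} (s : Finset α) (g : α → Quaternion ℝ) :
    (∑ a ∈ s, g a).re = ∑ a ∈ s, (g a).re :=
  map_sum quatRe g s

private lemma energy_update (N : ℕ) (w : Fin N → Fin N → Quaternion ℝ)
    (hsym : ∀ i j, w i j = star (w j i))
    (y : Fin N → Quaternion ℝ) (i : Fin N) (b : Quaternion ℝ) (r : ℝ)
    (hr : w i i = (r : Quaternion ℝ)) :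
    (∑ j, ∑ k, star (Function.update y i b j) * w j k * Function.update y i b k).re
      = (∑ j, ∑ k, star (y j) * w j k * y k).re
        + 2 * ((star b * ∑ j, w i j * y j).re - (star (y i) * ∑ j, w i j * y j).re)
        + r * Quaternion.normSq (b - y i) := by
  set d : Quaternion ℝ := b - y i with hd
  set v : Quaternion ℝ := ∑ j, w i j * y j with hv
  have hupd : ∀ j, Function.update y i b j = y j + (if j = i then d else 0) := by
    intro j
    rcases eq_or_ne j i with h | h
    · subst h; simp [hd]
    · simp [Function.update_of_ne h, h]
  have expand : ∀ j k, star (Function.update y i b j) * w j k * Function.update y i b k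
      = star (y j) * w j k * y k
        + star (if j = i then d else 0) * w j k * y k
        + star (y j) * w j k * (if k = i then d else 0)
        + star (if j = i then d else 0) * w j k * (if k = i then d else 0) := by
    intro j k; rw [hupd j, hupd k, star_add]; noncomm_ring
  have split : (∑ j, ∑ k, star (Function.update y i b j) * w j k * Function.update y i b k)
      = (∑ j, ∑ k, star (y j) * w j k * y k)
        + (∑ j, ∑ k, star (if j = i then d else 0) * w j k * y k)
        + (∑ j, ∑ k, star (y j) * w j k * (if k = i then d else 0))
        + (∑ j, ∑ k, star (if j = i then d else 0) * w j k * (if k = i then d else 0)) := by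
    simp only [expand, Finset.sum_add_distrib]
  have p2 : (∑ j, ∑ k, star (if j = i then d else 0) * w j k * y k) = star d * v := by
    rw [Finset.sum_comm]
    simp only [apply_ite (star : Quaternion ℝ → Quaternion ℝ), star_zero, ite_mul, zero_mul,
      Finset.sum_ite_eq', Finset.mem_univ, if_true, hv, Finset.mul_sum, mul_assoc]
  have p3 : (∑ j, ∑ k, star (y j) * w j k * (if k = i then d else 0))
      = ∑ j, star (y j) * w j i * d := by
    simp only [mul_ite, mul_zero, Finset.sum_ite_eq', Finset.mem_univ, if_true]
  have p4 : (∑ j, ∑ k, star (if j = i then d else 0) * w j k * (if k = i then d else 0))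
      = star d * w i i * d := by
    simp only [apply_ite (star : Quaternion ℝ → Quaternion ℝ), star_zero, ite_mul, zero_mul,
      mul_ite, mul_zero, Finset.sum_ite_eq', Finset.mem_univ, if_true]
  have p3re : (∑ j, star (y j) * w j i * d).re = (star d * v).re := by
    have key : ∀ j, (star (y j) * w j i * d).re = (star d * (w i j * y j)).re := by
      intro j
      have h1 : star (star (y j) * w j i * d) = star d * (w i j * y j) := by
        rw [star_mul, star_mul, star_star, hsym i j]
      rw [← Quaternion.re_star (star (y j) * w j i * d), h1]
    rw [re_sum, Finset.sum_congr rfl (fun j _ => key j), ← re_sum, ← Finset.mul_sum, ← hv]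
  have p4re : (star d * w i i * d).re = r * Quaternion.normSq d := by
    rw [hr]
    have h2 : star d * (r : Quaternion ℝ) * d = ((r * Quaternion.normSq d : ℝ) : Quaternion ℝ) := by
      rw [← Quaternion.coe_commutes, mul_assoc, Quaternion.star_mul_self, ← Quaternion.coe_mul]
    rw [h2, Quaternion.re_coe]
  have pdv : (star d * v).re = (star b * v).re - (star (y i) * v).re := by
    rw [hd, star_sub, sub_mul, Quaternion.re_sub]
  rw [split, Quaternion.re_add, Quaternion.re_add, Quaternion.re_add, p2, p3, p4, p3re, p4re, pdv]
  ring

theorem quaternionic_hopfield_convergence (D S : Set (Quaternion ℝ))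
    (hSfin : S.Finite)
    (f : Quaternion ℝ → Quaternion ℝ)
    (hfS : ∀ q ∈ D, f q ∈ S)
    (hproj : ∀ q ∈ D, ∀ s ∈ S, s ≠ f q →
      (star s * q).re < (star (f q) * q).re)
    (N : ℕ) (hN : 1 ≤ N)
    (w : Fin N → Fin N → Quaternion ℝ)
    (hsym : ∀ i j, w i j = star (w j i))
    (hdiag : ∀ i, ∃ r : ℝ, 0 ≤ r ∧ w i i = (r : Quaternion ℝ))
    (σ : ℕ → Fin N) (x : ℕ → Fin N → Quaternion ℝ)
    (hx0 : ∀ i, x 0 i ∈ S)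
    (hdyn : ∀ t i,
      ((i = σ t ∧ (∑ j, w i j * x t j) ∈ D) →
        x (t + 1) i = f (∑ j, w i j * x t j)) ∧
      (¬(i = σ t ∧ (∑ j, w i j * x t j) ∈ D) →
        x (t + 1) i = x t i)) :
    ∃ T, ∀ t, T ≤ t → x t = x T := by
  set E : (Fin N → Quaternion ℝ) → ℝ :=
    fun y => (∑ j, ∑ k, star (y j) * w j k * y k).re with hE
  -- states stay in S
  have hxS : ∀ t i, x t i ∈ S := by
    intro t
    induction t with
    | zero => exact hx0
    | succ t ih =>
      intro i
      by_cases h : i = σ t ∧ (∑ j, w i j * x t j) ∈ D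
      · rw [(hdyn t i).1 h]; exact hfS _ h.2
      · rw [(hdyn t i).2 h]; exact ih i
  -- the next state is an update of the current one
  have hupd : ∀ t, x (t + 1) = Function.update (x t) (σ t) (x (t + 1) (σ t)) := by
    intro t
    funext j
    rcases eq_or_ne j (σ t) with h | h
    · subst h; simp
    · rw [Function.update_of_ne h, (hdyn t j).2 (by tauto)]
  -- strict energy increase on a change
  have hstrict : ∀ t, x (t + 1) ≠ x t → E (x t) < E (x (t + 1)) := by
    intro t hne
    set i := σ t with hi
    set v : Quaternion ℝ := ∑ j, w i j * x t j with hv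
    have hvD : v ∈ D := by
      by_contra hvD
      apply hne
      have : x (t + 1) i = x t i := (hdyn t i).2 (by tauto)
      rw [hupd t, ← hi, this, Function.update_eq_self]
    have hb : x (t + 1) i = f v := (hdyn t i).1 ⟨rfl, hvD⟩
    have hba : f v ≠ x t i := by
      intro h
      apply hne
      rw [hupd t, ← hi, hb, h, Function.update_eq_self]
    obtain ⟨r, hr0, hrw⟩ := hdiag i
    have key := energy_update N w hsym (x t) i (f v) r hrw
    have hlt : (star (x t i) * v).re < (star (f v) * v).re :=
      hproj v hvD _ (hxS t i) (fun h => hba h.symm)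
    have hxt1 : x (t + 1) = Function.update (x t) i (f v) := by
      rw [hupd t, ← hi, hb]
    have hnn : 0 ≤ r * Quaternion.normSq (f v - x t i) :=
      mul_nonneg hr0 Quaternion.normSq_nonneg
    have key' : E (Function.update (x t) i (f v))
        = E (x t) + 2 * ((star (f v) * v).re - (star (x t i) * v).re)
          + r * Quaternion.normSq (f v - x t i) := by
      simpa [hE, ← hv] using key
    rw [hxt1, key']
    linarith
  -- monotonicity
  have hmono : Monotone (fun t => E (x t)) := by
    apply monotone_nat_of_le_succ
    intro t
    by_cases h : x (t + 1) = x t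
    · rw [h]
    · exact le_of_lt (hstrict t h)
  -- finitely many energy values
  have hfin : (Set.range fun t => E (x t)).Finite := by
    have hpi : {y : Fin N → Quaternion ℝ | ∀ i, y i ∈ S}.Finite := by
      have := Set.Finite.pi (fun _ : Fin N => hSfin)
      simpa [Set.pi, Set.mem_univ] using this
    apply Set.Finite.subset (hpi.image E)
    rintro _ ⟨t, rfl⟩
    exact ⟨x t, fun i => hxS t i, rfl⟩
  -- a maximal energy value is attained
  obtain ⟨m, ⟨T, hTm⟩, hmax⟩ :=
    Set.Finite.exists_maximalFor id _ hfin ⟨E (x 0), 0, rfl⟩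
  have hle : ∀ t, E (x t) ≤ m := by
    intro t
    rcases le_or_gt (E (x t)) m with h | h
    · exact h
    · exact absurd (hmax ⟨t, rfl⟩ (le_of_lt h)) (not_le.mpr h)
  have hconst : ∀ t, T ≤ t → E (x t) = m := by
    intro t ht
    exact le_antisymm (hle t) (hTm ▸ hmono ht)
  refine ⟨T, fun t ht => ?_⟩
  induction t with
  | zero => cases Nat.le_zero.mp ht; rfl
  | succ t ih =>
    rcases Nat.lt_or_ge T (t + 1) with h | h
    · have htT : T ≤ t := Nat.lt_succ_iff.mp h
      have hx1 : x (t + 1) = x t := by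
        by_contra hne
        have := hstrict t hne
        rw [hconst t htT, hconst (t + 1) (Nat.le_succ_of_le htT)] at this
        exact lt_irrefl _ this
      rw [hx1]; exact ih htT
    · have : T = t + 1 := le_antisymm ht h
      rw [this]
end

section
/- (Convergence of the quaternion-valued split-sign Hopfield network.) Let S = { p ∈ ℍ : each of the four real components of p lies in {−1,+1} } and D = { q ∈ ℍ : all four real components of q are nonzero }, and for q ∈ D let sgn(q) ∈ S be the quaternion whose components are the signs of the corresponding components of q. Let N ≥ 1 and let (w_ij) be an N×N quaternion matrix with w_ij = star(w_ji) for all i, j, and with each diagonal entry w_ii a nonnegative real number. Then for every update schedule σ : ℕ → {1,…,N} and every initial state x(0) ∈ S^N, the asynchronous trajectory defined by x_i(t+1) = sgn(v_i(t)) if i = σ(t) and v_i(t) ∈ D, and x_i(t+1) = x_i(t) otherwise, where v_i(t) = Σⱼ w_ij * x_j(t), is eventually constant: there exists T such that x(t) = x(T) for all t ≥ T. -/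
private lemma hop_star_mul_re (p q : Quaternion ℝ) :
    (star p * q).re = p.re*q.re + p.imI*q.imI + p.imJ*q.imJ + p.imK*q.imK := by
  simp [Quaternion.re_mul]

private lemma hop_diag_re (r : ℝ) (hr : 0 ≤ r) (d : Quaternion ℝ) :
    0 ≤ (star d * (r : Quaternion ℝ) * d).re := by
  have h : (star d * (r:Quaternion ℝ) * d).re
      = r * (d.re^2 + d.imI^2 + d.imJ^2 + d.imK^2) := by
    simp [Quaternion.re_mul, Quaternion.imI_mul, Quaternion.imJ_mul, Quaternion.imK_mul]
    ring
  rw [h]; positivity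

private lemma hop_comp_ineq (a v : ℝ) (ha : a = -1 ∨ a = 1) (hv : v ≠ 0) :
    0 ≤ (Real.sign v - a) * v ∧ (Real.sign v ≠ a → 0 < (Real.sign v - a) * v) := by
  rcases hv.lt_or_gt with h | h
  · rw [Real.sign_of_neg h]
    rcases ha with rfl | rfl
    · exact ⟨by nlinarith, fun hc => absurd rfl hc⟩
    · exact ⟨by nlinarith, fun _ => by nlinarith⟩
  · rw [Real.sign_of_pos h]
    rcases ha with rfl | rfl
    · exact ⟨by nlinarith, fun _ => by nlinarith⟩
    · exact ⟨by nlinarith, fun hc => absurd rfl hc⟩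

private lemma hop_quad_update {N : ℕ} (w : Fin N → Fin N → Quaternion ℝ)
    (hsym : ∀ i j, w i j = star (w j i)) (i : Fin N) (b : Quaternion ℝ)
    (x : Fin N → Quaternion ℝ) :
    (∑ j, ∑ k, star (if j = i then b else x j) * w j k * (if k = i then b else x k)) =
    (∑ j, ∑ k, star (x j) * w j k * x k)
      + star (b - x i) * (∑ j, w i j * x j)
      + star (∑ j, w i j * x j) * (b - x i)
      + star (b - x i) * w i i * (b - x i) := by
  set d := b - x i with hd
  set v := ∑ j, w i j * x j with hv
  set e : Fin N → Quaternion ℝ := fun m => if m = i then d else 0 with he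
  have hy : ∀ m, (if m = i then b else x m) = x m + e m := by
    intro m
    by_cases h : m = i <;> simp [he, h, hd]
  have expand : ∀ j k, star (x j + e j) * w j k * (x k + e k)
      = star (x j) * w j k * x k + star (x j) * w j k * e k
        + (star (e j) * w j k * x k + star (e j) * w j k * e k) := by
    intro j k; rw [star_add]; noncomm_ring
  have hsplit : (∑ j, ∑ k, star (if j = i then b else x j) * w j k * (if k = i then b else x k))
      = ∑ j, ∑ k, (star (x j) * w j k * x k + star (x j) * w j k * e k
        + (star (e j) * w j k * x k + star (e j) * w j k * e k)) := by
    refine Finset.sum_congr rfl fun j _ => Finset.sum_congr rfl fun k _ => ?_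
    rw [hy j, hy k, expand]
  have hstar : ∀ j, star (x j) * w j i = star (w i j * x j) := by
    intro j; rw [star_mul, hsym i j, star_star]
  have T2 : (∑ j, ∑ k, star (x j) * w j k * e k) = star v * d := by
    have h1 : ∀ j : Fin N, (∑ k, star (x j) * w j k * e k) = star (x j) * w j i * d := by
      intro j
      refine Finset.sum_eq_single i (fun k _ hk => by simp [he, hk]) (by simp) |>.trans ?_
      simp [he]
    rw [Finset.sum_congr rfl fun j _ => h1 j, ← Finset.sum_mul, hv, star_sum]
    congr 1
    exact Finset.sum_congr rfl fun j _ => hstar j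
  have T3 : (∑ j, ∑ k, star (e j) * w j k * x k) = star d * v := by
    refine Finset.sum_eq_single i (fun j _ hj => by simp [he, hj]) (by simp) |>.trans ?_
    rw [hv, Finset.mul_sum]
    exact Finset.sum_congr rfl fun k _ => by simp [he, mul_assoc]
  have T4 : (∑ j, ∑ k, star (e j) * w j k * e k) = star d * w i i * d := by
    refine Finset.sum_eq_single i (fun j _ hj => by simp [he, hj]) (by simp) |>.trans ?_
    refine Finset.sum_eq_single i (fun k _ hk => by simp [he, hk]) (by simp) |>.trans ?_
    simp [he]
  rw [hsplit]
  simp only [Finset.sum_add_distrib]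
  rw [T2, T3, T4]
  abel

noncomputable def hopE {N : ℕ} (w : Fin N → Fin N → Quaternion ℝ)
    (y : Fin N → Quaternion ℝ) : ℝ :=
  (∑ j, ∑ k, star (y j) * w j k * y k).re

theorem quaternion_split_sign_hopfield_convergence
    (N : ℕ) (hN : 1 ≤ N)
    (w : Fin N → Fin N → Quaternion ℝ)
    (hsym : ∀ i j, w i j = star (w j i))
    (hdiag : ∀ i, ∃ r : ℝ, 0 ≤ r ∧ w i i = (r : Quaternion ℝ))
    (σ : ℕ → Fin N) (x : ℕ → Fin N → Quaternion ℝ)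
    (hx0 : ∀ i, ((x 0 i).re = -1 ∨ (x 0 i).re = 1) ∧
      ((x 0 i).imI = -1 ∨ (x 0 i).imI = 1) ∧
      ((x 0 i).imJ = -1 ∨ (x 0 i).imJ = 1) ∧
      ((x 0 i).imK = -1 ∨ (x 0 i).imK = 1))
    (hdyn : ∀ t i,
      ((i = σ t ∧ (∑ j, w i j * x t j).re ≠ 0 ∧ (∑ j, w i j * x t j).imI ≠ 0 ∧
          (∑ j, w i j * x t j).imJ ≠ 0 ∧ (∑ j, w i j * x t j).imK ≠ 0) →
        x (t + 1) i = (⟨Real.sign (∑ j, w i j * x t j).re,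
          Real.sign (∑ j, w i j * x t j).imI,
          Real.sign (∑ j, w i j * x t j).imJ,
          Real.sign (∑ j, w i j * x t j).imK⟩ : Quaternion ℝ)) ∧
      (¬(i = σ t ∧ (∑ j, w i j * x t j).re ≠ 0 ∧ (∑ j, w i j * x t j).imI ≠ 0 ∧
          (∑ j, w i j * x t j).imJ ≠ 0 ∧ (∑ j, w i j * x t j).imK ≠ 0) →
        x (t + 1) i = x t i)) :
    ∃ T, ∀ t, T ≤ t → x t = x T := by
  classical
  -- the states stay in the sign set
  have hS : ∀ t i, ((x t i).re = -1 ∨ (x t i).re = 1) ∧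
      ((x t i).imI = -1 ∨ (x t i).imI = 1) ∧
      ((x t i).imJ = -1 ∨ (x t i).imJ = 1) ∧
      ((x t i).imK = -1 ∨ (x t i).imK = 1) := by
    intro t
    induction t with
    | zero => exact hx0
    | succ t ih =>
      intro i
      by_cases hc : (i = σ t ∧ (∑ j, w i j * x t j).re ≠ 0 ∧ (∑ j, w i j * x t j).imI ≠ 0 ∧
          (∑ j, w i j * x t j).imJ ≠ 0 ∧ (∑ j, w i j * x t j).imK ≠ 0)
      · rw [(hdyn t i).1 hc]
        exact ⟨Real.sign_apply_eq_of_ne_zero _ hc.2.1,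
          Real.sign_apply_eq_of_ne_zero _ hc.2.2.1,
          Real.sign_apply_eq_of_ne_zero _ hc.2.2.2.1,
          Real.sign_apply_eq_of_ne_zero _ hc.2.2.2.2⟩
      · rw [(hdyn t i).2 hc]; exact ih i
  -- energy step
  set e : ℕ → ℝ := fun t => hopE w (x t) with hedef
  have hstep : ∀ t, e t ≤ e (t+1) ∧ (x (t+1) ≠ x t → e t < e (t+1)) := by
    intro t
    by_cases hC : ((∑ j, w (σ t) j * x t j).re ≠ 0 ∧ (∑ j, w (σ t) j * x t j).imI ≠ 0 ∧
        (∑ j, w (σ t) j * x t j).imJ ≠ 0 ∧ (∑ j, w (σ t) j * x t j).imK ≠ 0)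
    · -- the selected neuron updates to the sign quaternion
      set v := ∑ j, w (σ t) j * x t j with hv
      set b : Quaternion ℝ := ⟨Real.sign v.re, Real.sign v.imI, Real.sign v.imJ,
        Real.sign v.imK⟩ with hb
      set a := x t (σ t) with ha
      have hupd : ∀ j, x (t+1) j = if j = σ t then b else x t j := by
        intro j
        by_cases hj : j = σ t
        · subst hj
          rw [if_pos rfl]
          exact (hdyn t (σ t)).1 ⟨rfl, hC⟩
        · rw [if_neg hj]
          exact (hdyn t j).2 (fun hcon => hj hcon.1)
      have hQ : (∑ j, ∑ k, star (x (t+1) j) * w j k * x (t+1) k)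
          = (∑ j, ∑ k, star (x t j) * w j k * x t k)
            + star (b - a) * v + star v * (b - a) + star (b - a) * w (σ t) (σ t) * (b - a) := by
        have h1 : (∑ j, ∑ k, star (x (t+1) j) * w j k * x (t+1) k)
            = (∑ j, ∑ k, star (if j = σ t then b else x t j) * w j k *
                (if k = σ t then b else x t k)) :=
          Finset.sum_congr rfl fun j _ => Finset.sum_congr rfl fun k _ => by
            rw [hupd j, hupd k]
        rw [h1, hop_quad_update w hsym (σ t) b (x t), ← hv, ← ha]
      set d := b - a with hd
      have hvd : (star v * d).re = (star d * v).re := by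
        rw [show star v * d = star (star d * v) by rw [star_mul, star_star]]
        rw [Quaternion.re_star, hop_star_mul_re]
      have hEeq : e (t+1) = e t + 2 * (star d * v).re
          + (star d * w (σ t) (σ t) * d).re := by
        have := congrArg QuaternionAlgebra.re hQ
        simp only [hedef, hopE, Quaternion.re_add] at this ⊢
        rw [this, hvd]; ring
      -- component values
      have hd1 : d.re = Real.sign v.re - a.re := by simp [hd, hb]; rfl
      have hd2 : d.imI = Real.sign v.imI - a.imI := by simp [hd, hb]; rfl
      have hd3 : d.imJ = Real.sign v.imJ - a.imJ := by simp [hd, hb]; rfl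
      have hd4 : d.imK = Real.sign v.imK - a.imK := by simp [hd, hb]; rfl
      have hdot : (star d * v).re = (Real.sign v.re - a.re) * v.re
          + (Real.sign v.imI - a.imI) * v.imI + (Real.sign v.imJ - a.imJ) * v.imJ
          + (Real.sign v.imK - a.imK) * v.imK := by
        rw [hop_star_mul_re, hd1, hd2, hd3, hd4]
      obtain ⟨haS1, haS2, haS3, haS4⟩ := hS t (σ t)
      have c1 := hop_comp_ineq a.re v.re haS1 hC.1
      have c2 := hop_comp_ineq a.imI v.imI haS2 hC.2.1
      have c3 := hop_comp_ineq a.imJ v.imJ haS3 hC.2.2.1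
      have c4 := hop_comp_ineq a.imK v.imK haS4 hC.2.2.2
      obtain ⟨r, hr0, hrw⟩ := hdiag (σ t)
      have hdiagre : 0 ≤ (star d * w (σ t) (σ t) * d).re := by
        rw [hrw]; exact hop_diag_re r hr0 d
      constructor
      · rw [hEeq]
        have : 0 ≤ (star d * v).re := by rw [hdot]; linarith [c1.1, c2.1, c3.1, c4.1]
        linarith
      · intro hne
        have hba : b ≠ a := by
          intro hba
          apply hne
          funext j
          rw [hupd j]
          by_cases hj : j = σ t
          · subst hj; rw [if_pos rfl, hba, ha]
          · rw [if_neg hj]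
        have hcomp : Real.sign v.re ≠ a.re ∨ Real.sign v.imI ≠ a.imI ∨
            Real.sign v.imJ ≠ a.imJ ∨ Real.sign v.imK ≠ a.imK := by
          by_contra h
          push_neg at h
          exact hba (by ext <;> simp [hb, h.1, h.2.1, h.2.2.1, h.2.2.2])
        have hpos : 0 < (star d * v).re := by
          rw [hdot]
          rcases hcomp with h | h | h | h
          · linarith [c1.2 h, c2.1, c3.1, c4.1]
          · linarith [c1.1, c2.2 h, c3.1, c4.1]
          · linarith [c1.1, c2.1, c3.2 h, c4.1]
          · linarith [c1.1, c2.1, c3.1, c4.2 h]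
        rw [hEeq]; linarith
    · -- nothing changes
      have hfix : x (t+1) = x t := by
        funext j
        refine (hdyn t j).2 ?_
        rintro ⟨hj, h⟩
        subst hj
        exact hC h
      exact ⟨le_of_eq (by rw [hedef]; simp [hfix]), fun hne => absurd hfix hne⟩
  have mono : Monotone e := monotone_nat_of_le_succ fun t => (hstep t).1
  -- finiteness of the state space
  set Sq : Set (Quaternion ℝ) := {q | (q.re = -1 ∨ q.re = 1) ∧ (q.imI = -1 ∨ q.imI = 1) ∧
      (q.imJ = -1 ∨ q.imJ = 1) ∧ (q.imK = -1 ∨ q.imK = 1)} with hSq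
  have hSqfin : Sq.Finite := by
    have hsub : Sq ⊆ (fun p : ℝ×ℝ×ℝ×ℝ => (⟨p.1, p.2.1, p.2.2.1, p.2.2.2⟩ : Quaternion ℝ)) ''
        ((({-1,1} : Set ℝ)) ×ˢ (({-1,1} : Set ℝ)) ×ˢ (({-1,1} : Set ℝ)) ×ˢ (({-1,1} : Set ℝ))) := by
      rintro q ⟨h1, h2, h3, h4⟩
      refine ⟨(q.re, q.imI, q.imJ, q.imK), ?_, rfl⟩
      simp only [Set.mem_prod, Set.mem_insert_iff, Set.mem_singleton_iff]
      exact ⟨h1, h2, h3, h4⟩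
    have hfinp : ((({-1,1} : Set ℝ)) ×ˢ (({-1,1} : Set ℝ)) ×ˢ (({-1,1} : Set ℝ)) ×ˢ
        (({-1,1} : Set ℝ))).Finite :=
      (Set.toFinite _).prod ((Set.toFinite _).prod ((Set.toFinite _).prod (Set.toFinite _)))
    exact (hfinp.image _).subset hsub
  have hSPfin : (Set.pi Set.univ fun _ : Fin N => Sq).Finite :=
    Set.Finite.pi fun _ => hSqfin
  have hmem : ∀ t, x t ∈ Set.pi Set.univ fun _ : Fin N => Sq := by
    intro t
    intro i _
    exact hS t i
  have hranfin : (Set.range e).Finite := by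
    refine ((hSPfin.image (hopE w)).subset ?_)
    rintro _ ⟨t, rfl⟩
    exact ⟨x t, hmem t, rfl⟩
  obtain ⟨m, hmem', hmax⟩ :=
    Set.Finite.exists_maximalFor id (Set.range e) hranfin (Set.range_nonempty e)
  obtain ⟨T, rfl⟩ := hmem'
  have hconst : ∀ t, T ≤ t → x (t+1) = x t := by
    intro t ht
    by_contra hne
    have h1 : e t < e (t+1) := (hstep t).2 hne
    have h2 : id (e (t+1)) ≤ id (e T) :=
      hmax (j := e (t+1)) ⟨t+1, rfl⟩ (mono (ht.trans (Nat.le_succ t)))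
    have h3 : e T ≤ e t := mono ht
    simp only [id] at h2
    linarith
  refine ⟨T, fun t ht => ?_⟩
  induction t, ht using Nat.le_induction with
  | base => rfl
  | succ n hn ih => rw [hconst n hn, ih]
end

section
/- (Convergence of the tessarine-valued multistate Hopfield network.) Identify tessarines with pairs (u,v) ∈ ℂ² endowed with the product (u₁,v₁)·(u₂,v₂) = (u₁u₂ + v₁v₂, u₁v₂ + v₁u₂) and the involution τ(u,v) = (conj u, conj v). Let K ≥ 2 be an integer, let S_K ⊂ ℂ be the K-th roots of unity, let D_K = { z ∈ ℂ : z ≠ 0 and ∃ u ∈ S_K with |arg(z · conj u)| < π/K }, and for z ∈ D_K let csgn(z) be that unique u. Set S_T = { (u,v) : u, v ∈ S_K }, D_T = { (u,v) : u, v ∈ D_K }, and tsgn(u,v) = (csgn u, csgn v). Let N ≥ 1 and let (w_ij) be an N×N matrix of tessarines with w_ij = τ(w_ji) for all i, j, and with each diagonal entry w_ii = (r_ii, 0) where r_ii is a nonnegative real number. Then for every update schedule σ : ℕ → {1,…,N} and every initial state x(0) ∈ (S_T)^N, the asynchronous trajectory defined by x_i(t+1) = tsgn(v_i(t)) if i =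 σ(t) and v_i(t) ∈ D_T, and x_i(t+1) = x_i(t) otherwise, where v_i(t) = Σⱼ w_ij · x_j(t) (sum and product of tessarines), is eventually constant: there exists T such that x(t) = x(T) for all t ≥ T. -/
/-- Multiplication of tessarines represented as pairs `(u, v) ∈ ℂ²`,
i.e. `u + v𝐣` with `𝐣² = +1` and `𝐣` commuting with `𝐢`. -/
def tessMul (p q : ℂ × ℂ) : ℂ × ℂ :=
  (p.1 * q.1 + p.2 * q.2, p.1 * q.2 + p.2 * q.1)

/-- The reverse-involution on tessarines: componentwise complex conjugation. -/
def tessTau (p : ℂ × ℂ) : ℂ × ℂ :=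
  ((starRingEnd ℂ) p.1, (starRingEnd ℂ) p.2)


noncomputable def tB (p q : ℂ × ℂ) : ℝ :=
  ((starRingEnd ℂ) p.1 * q.1 + (starRingEnd ℂ) p.2 * q.2).re

lemma tB_sym (m p q : ℂ × ℂ) : tB p (tessMul m q) = tB q (tessMul (tessTau m) p) := by
  simp [tB, tessMul, tessTau, Complex.add_re, Complex.mul_re, Complex.mul_im,
    Complex.conj_re, Complex.conj_im]
  ring

lemma tB_add (p q q' : ℂ × ℂ) : tB p (q + q') = tB p q + tB p q' := by
  simp only [tB, Prod.fst_add, Prod.snd_add, mul_add, Complex.add_re]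
  ring

lemma tB_zero (p : ℂ × ℂ) : tB p 0 = 0 := by simp [tB]

lemma tB_sum {ι : Type*} (p : ℂ × ℂ) (s : Finset ι) (f : ι → ℂ × ℂ) :
    tB p (∑ j ∈ s, f j) = ∑ j ∈ s, tB p (f j) := by
  classical
  induction s using Finset.induction with
  | empty => simp [tB_zero]
  | insert a s h ih => simp [Finset.sum_insert h, tB_add, ih]

lemma diag_bracket (r : ℝ) (hr : 0 ≤ r) (a b : ℂ × ℂ) :
    0 ≤ tB b (tessMul ((r:ℂ), (0:ℂ)) b) + tB a (tessMul ((r:ℂ), (0:ℂ)) a)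
        - 2 * tB b (tessMul ((r:ℂ), (0:ℂ)) a) := by
  have h : tB b (tessMul ((r:ℂ), (0:ℂ)) b) + tB a (tessMul ((r:ℂ), (0:ℂ)) a)
      - 2 * tB b (tessMul ((r:ℂ), (0:ℂ)) a)
      = r * (Complex.normSq (b.1 - a.1) + Complex.normSq (b.2 - a.2)) := by
    simp [tB, tessMul, Complex.normSq_apply, Complex.add_re, Complex.mul_re,
      Complex.conj_re, Complex.conj_im, Complex.sub_re, Complex.sub_im,
      Complex.ofReal_re, Complex.ofReal_im]
    ring
  rw [h]
  exact mul_nonneg hr (add_nonneg (Complex.normSq_nonneg _) (Complex.normSq_nonneg _))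

lemma energy_expand {N : ℕ} (w : Fin N → Fin N → ℂ × ℂ)
    (hsym : ∀ i j, w i j = tessTau (w j i)) (y : Fin N → ℂ × ℂ) (i0 : Fin N) (p : ℂ × ℂ) :
    ∑ i, ∑ j, tB (Function.update y i0 p i) (tessMul (w i j) (Function.update y i0 p j))
      = tB p (tessMul (w i0 i0) p)
        + 2 * ∑ j ∈ Finset.univ.erase i0, tB p (tessMul (w i0 j) (y j))
        + ∑ i ∈ Finset.univ.erase i0, ∑ j ∈ Finset.univ.erase i0,
            tB (y i) (tessMul (w i j) (y j)) := by
  classical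
  have split : ∀ g : Fin N → ℝ, ∑ i, g i = g i0 + ∑ i ∈ Finset.univ.erase i0, g i :=
    fun g => (Finset.add_sum_erase Finset.univ g (Finset.mem_univ i0)).symm
  have h1 : ∑ j, tB p (tessMul (w i0 j) (Function.update y i0 p j))
      = tB p (tessMul (w i0 i0) p)
        + ∑ j ∈ Finset.univ.erase i0, tB p (tessMul (w i0 j) (y j)) := by
    rw [split (fun j => tB p (tessMul (w i0 j) (Function.update y i0 p j)))]
    simp only [Function.update_self]
    congr 1
    apply Finset.sum_congr rfl
    intro j hj
    rw [Function.update_of_ne (Finset.mem_erase.mp hj).1]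
  have h2 : ∀ i ∈ Finset.univ.erase i0,
      ∑ j, tB (y i) (tessMul (w i j) (Function.update y i0 p j))
      = tB p (tessMul (w i0 i) (y i))
        + ∑ j ∈ Finset.univ.erase i0, tB (y i) (tessMul (w i j) (y j)) := by
    intro i hi
    rw [split (fun j => tB (y i) (tessMul (w i j) (Function.update y i0 p j)))]
    rw [Function.update_self, tB_sym, ← hsym]
    congr 1
    apply Finset.sum_congr rfl
    intro j hj
    rw [Function.update_of_ne (Finset.mem_erase.mp hj).1]
  rw [split (fun i => ∑ j, tB (Function.update y i0 p i)
    (tessMul (w i j) (Function.update y i0 p j)))]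
  simp only [Function.update_self]
  rw [h1]
  have h3 : ∑ i ∈ Finset.univ.erase i0, ∑ j, tB (Function.update y i0 p i)
      (tessMul (w i j) (Function.update y i0 p j))
      = ∑ i ∈ Finset.univ.erase i0, (tB p (tessMul (w i0 i) (y i))
        + ∑ j ∈ Finset.univ.erase i0, tB (y i) (tessMul (w i j) (y j))) := by
    apply Finset.sum_congr rfl
    intro i hi
    rw [Function.update_of_ne (Finset.mem_erase.mp hi).1]
    exact h2 i hi
  rw [h3, Finset.sum_add_distrib]
  ring

lemma energy_diff {N : ℕ} (w : Fin N → Fin N → ℂ × ℂ)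
    (hsym : ∀ i j, w i j = tessTau (w j i)) (y : Fin N → ℂ × ℂ) (i0 : Fin N) (b : ℂ × ℂ) :
    (∑ i, ∑ j, tB (Function.update y i0 b i) (tessMul (w i j) (Function.update y i0 b j)))
      - ∑ i, ∑ j, tB (y i) (tessMul (w i j) (y j))
    = 2 * (tB b (∑ j, tessMul (w i0 j) (y j)) - tB (y i0) (∑ j, tessMul (w i0 j) (y j)))
      + (tB b (tessMul (w i0 i0) b) + tB (y i0) (tessMul (w i0 i0) (y i0))
        - 2 * tB b (tessMul (w i0 i0) (y i0))) := by
  classical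
  have split : ∀ g : Fin N → ℝ, ∑ i, g i = g i0 + ∑ i ∈ Finset.univ.erase i0, g i :=
    fun g => (Finset.add_sum_erase Finset.univ g (Finset.mem_univ i0)).symm
  have hexp := energy_expand w hsym y i0 b
  have hexp' := energy_expand w hsym y i0 (y i0)
  rw [Function.update_eq_self] at hexp'
  have hV : ∀ p : ℂ × ℂ, ∑ j ∈ Finset.univ.erase i0, tB p (tessMul (w i0 j) (y j))
      = tB p (∑ j, tessMul (w i0 j) (y j)) - tB p (tessMul (w i0 i0) (y i0)) := by
    intro p
    rw [tB_sum, split (fun j => tB p (tessMul (w i0 j) (y j)))]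
    ring
  rw [hexp, hexp', hV b, hV (y i0)]
  ring

lemma keyIneqReal (c s az aw zr zi wr wi : ℝ) (hc : 0 ≤ c) (hs : 0 < s)
    (hcs : c^2 + s^2 = 1) (hza : 0 < az) (hwa : 0 < aw)
    (hz2 : zr ^ 2 + zi ^ 2 = az ^ 2) (hw2 : wr ^ 2 + wi ^ 2 = aw ^ 2)
    (hz : az * c < zr) (hw : aw * s ≤ wr) :
    0 < zr * wr - zi * wi := by
  have hzre : 0 < zr := lt_of_le_of_lt (mul_nonneg hza.le hc) hz
  have hwre : 0 < wr := lt_of_lt_of_le (mul_pos hwa hs) hw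
  have h1 : (az * c)^2 < zr^2 := by nlinarith [mul_nonneg hza.le hc]
  have h2 : (aw * s)^2 ≤ wr^2 := by nlinarith [mul_pos hwa hs]
  have hzim : zi ^ 2 < (az * s) ^ 2 := by nlinarith [sq_nonneg az]
  have hwim : wi ^ 2 ≤ (aw * c) ^ 2 := by nlinarith [sq_nonneg aw]
  have hzim' : |zi| < az * s := by
    have h3 : 0 < az * s := mul_pos hza hs
    nlinarith [abs_nonneg zi, sq_abs zi]
  have hwim' : |wi| ≤ aw * c := by
    have h3 : 0 ≤ aw * c := mul_nonneg hwa.le hc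
    nlinarith [abs_nonneg wi, sq_abs wi]
  have him : zi * wi ≤ (az * s) * (aw * c) := by
    calc zi * wi ≤ |zi| * |wi| := by rw [← abs_mul]; exact le_abs_self _
      _ ≤ (az * s) * (aw * c) :=
          mul_le_mul hzim'.le hwim' (abs_nonneg _) (mul_nonneg hza.le hs.le)
  have hre : (az * s) * (aw * c) < zr * wr := by
    calc (az * s) * (aw * c) = (az * c) * (aw * s) := by ring
      _ < zr * wr := mul_lt_mul hz hw (mul_pos hwa hs) hzre.le
  linarith

lemma keyIneq (c s : ℝ) (hc : 0 ≤ c) (hs : 0 < s) (hcs : c^2 + s^2 = 1)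
    (z w : ℂ) (hz0 : z ≠ 0) (hw0 : w ≠ 0)
    (hz : ‖z‖ * c < z.re) (hw : ‖w‖ * s ≤ w.re) :
    0 < (z * w).re := by
  have hza : 0 < ‖z‖ := norm_pos_iff.mpr hz0
  have hwa : 0 < ‖w‖ := norm_pos_iff.mpr hw0
  have hz2 : z.re ^ 2 + z.im ^ 2 = (‖z‖) ^ 2 := by
    rw [Complex.sq_norm, Complex.normSq_apply]; ring
  have hw2 : w.re ^ 2 + w.im ^ 2 = (‖w‖) ^ 2 := by
    rw [Complex.sq_norm, Complex.normSq_apply]; ring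
  have := keyIneqReal c s _ _ _ _ _ _ hc hs hcs hza hwa hz2 hw2 hz hw
  simpa [Complex.mul_re] using this

lemma arg_lt_re (α : ℝ) (hα2 : α ≤ Real.pi) (z : ℂ) (hz : z ≠ 0)
    (h : |z.arg| < α) : ‖z‖ * Real.cos α < z.re := by
  have hza : 0 < ‖z‖ := norm_pos_iff.mpr hz
  have hcos : Real.cos α < Real.cos |z.arg| :=
    Real.cos_lt_cos_of_nonneg_of_le_pi (abs_nonneg _) hα2 h
  have : Real.cos |z.arg| = z.re / ‖z‖ := by
    rw [Real.cos_abs, Complex.cos_arg hz]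
  rw [this] at hcos
  calc ‖z‖ * Real.cos α < ‖z‖ * (z.re / ‖z‖) :=
        mul_lt_mul_of_pos_left hcos hza
    _ = z.re := by field_simp

lemma sin_ge (K k : ℕ) (hK : 2 ≤ K) (hk1 : 1 ≤ k) (hk : k < K) :
    Real.sin (Real.pi / K) ≤ Real.sin (Real.pi * k / K) := by
  have hKpos : (0:ℝ) < K := by positivity
  have hK2 : (2:ℝ) ≤ K := by exact_mod_cast hK
  have hk1' : (1:ℝ) ≤ k := by exact_mod_cast hk1
  have hk' : (k:ℝ) + 1 ≤ K := by exact_mod_cast hk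
  have hpi := Real.pi_pos
  have hmono := Real.strictMonoOn_sin.monotoneOn
  have hbase : Real.pi / K ≤ Real.pi / 2 := by
    apply div_le_div_of_nonneg_left Real.pi_pos.le (by norm_num) hK2
  have hbase0 : 0 < Real.pi / K := by positivity
  have h0 : 0 ≤ Real.pi * k / K := by positivity
  have hih : Real.pi / K ≤ Real.pi * k / K := by
    rw [div_le_div_iff₀ hKpos hKpos]
    nlinarith [mul_nonneg (mul_pos hpi hKpos).le (sub_nonneg.mpr hk1')]
  by_cases hc : Real.pi * k / K ≤ Real.pi / 2
  · exact hmono (Set.mem_Icc.mpr ⟨by linarith, hbase⟩)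
      (Set.mem_Icc.mpr ⟨by linarith, hc⟩) hih
  · push_neg at hc
    rw [show Real.pi * k / K = Real.pi - (Real.pi - Real.pi * k / K) by ring,
      Real.sin_pi_sub]
    have h1 : Real.pi / K ≤ Real.pi - Real.pi * k / K := by
      rw [le_sub_iff_add_le, ← add_div, div_le_iff₀ hKpos]
      nlinarith
    apply hmono (Set.mem_Icc.mpr ⟨by linarith, hbase⟩)
      (Set.mem_Icc.mpr ⟨by linarith, by linarith⟩) h1

lemma oneSubRoot (K k : ℕ) (hK : 2 ≤ K) (hk1 : 1 ≤ k) (hk : k < K)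
    (hKpos : (0:ℝ) < K) :
    Real.sin (Real.pi / K) ≤ Real.sin (Real.pi * k / K) →
    ‖(1 - Complex.exp (((2 * Real.pi * k / K : ℝ)) * Complex.I))‖ * Real.sin (Real.pi / K)
      ≤ (1 - Complex.exp (((2 * Real.pi * k / K : ℝ)) * Complex.I)).re := by
  intro hsin
  set t : ℝ := Real.pi * k / K with ht
  have h2t : (2 * Real.pi * k / K : ℝ) = 2 * t := by rw [ht]; ring
  have htnn : 0 ≤ Real.sin t := by
    apply Real.sin_nonneg_of_nonneg_of_le_pi
    · positivity
    · rw [ht, div_le_iff₀ hKpos]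
      have : (k:ℝ) ≤ K := by exact_mod_cast hk.le
      nlinarith [Real.pi_pos]
  have hre : (1 - Complex.exp (((2 * Real.pi * k / K : ℝ)) * Complex.I)).re
      = 1 - Real.cos (2 * t) := by
    rw [Complex.sub_re, Complex.exp_ofReal_mul_I_re, h2t, Complex.one_re]
  have him : (1 - Complex.exp (((2 * Real.pi * k / K : ℝ)) * Complex.I)).im
      = - Real.sin (2 * t) := by
    rw [Complex.sub_im, Complex.exp_ofReal_mul_I_im, h2t, Complex.one_im]
    ring
  have hcos2 : 1 - Real.cos (2*t) = 2 * Real.sin t ^ 2 := by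
    rw [Real.cos_two_mul]
    nlinarith [Real.sin_sq_add_cos_sq t]
  have habs : ‖(1 - Complex.exp (((2 * Real.pi * k / K : ℝ)) * Complex.I))‖
      = 2 * Real.sin t := by
    rw [Complex.norm_def, Complex.normSq_apply, hre, him]
    rw [show (1 - Real.cos (2*t)) * (1 - Real.cos (2*t)) + -Real.sin (2*t) * -Real.sin (2*t)
        = (2 * Real.sin t) ^ 2 by
      nlinarith [Real.sin_sq_add_cos_sq (2*t), hcos2]]
    exact Real.sqrt_sq (by positivity)
  rw [habs, hre, hcos2]
  nlinarith [mul_le_mul_of_nonneg_left hsin htnn]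

lemma root_form (K k : ℕ) (hK : 0 < K) :
    Complex.exp (2 * Real.pi * Complex.I * k / K)
      = Complex.exp (((2 * Real.pi * k / K : ℝ)) * Complex.I) := by
  congr 1
  push_cast
  have : (K:ℂ) ≠ 0 := by exact_mod_cast hK.ne'
  field_simp

lemma root_abs (K k : ℕ) (hK : 0 < K) :
    ‖(Complex.exp (2 * Real.pi * Complex.I * k / K))‖ = 1 := by
  rw [root_form K k hK]
  exact Complex.norm_exp_ofReal_mul_I _

lemma root_mul_conj (K m n : ℕ) (hK : 2 ≤ K) (hm : m < K) (hn : n < K)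
    (hne : Complex.exp (2 * Real.pi * Complex.I * m / K)
      ≠ Complex.exp (2 * Real.pi * Complex.I * n / K)) :
    ∃ k : ℕ, 1 ≤ k ∧ k < K ∧
      Complex.exp (2 * Real.pi * Complex.I * m / K) *
        (starRingEnd ℂ) (Complex.exp (2 * Real.pi * Complex.I * n / K))
      = Complex.exp (((2 * Real.pi * k / K : ℝ)) * Complex.I) := by
  have hK0 : 0 < K := by omega
  have hKc : (K:ℂ) ≠ 0 := by exact_mod_cast hK0.ne'
  set a : ℕ := m + K - n with ha
  set q : ℕ := a / K with hq
  set k : ℕ := a % K with hkdef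
  have hqa : K * q + k = a := Nat.div_add_mod a K
  have hk1 : 1 ≤ k := by
    by_contra h
    have hk0 : k = 0 := by omega
    have hub : a < 2*K := by omega
    have hlb : 0 < a := by omega
    have hq1 : q = 1 := by
      rcases Nat.lt_or_ge q 1 with h1 | h1
      · exfalso
        have : q = 0 := Nat.lt_one_iff.mp h1
        rw [this, hk0] at hqa
        omega
      rcases Nat.lt_or_ge q 2 with h2 | h2
      · omega
      · exfalso
        have : 2 * K ≤ K * q := by nlinarith
        omega
    have : m = n := by
      rw [hq1, hk0] at hqa
      omega
    exact hne (by rw [this])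
  have hkK : k < K := Nat.mod_lt _ hK0
  refine ⟨k, hk1, hkK, ?_⟩
  rw [root_form K m hK0, root_form K n hK0]
  rw [← Complex.exp_conj]
  rw [← Complex.exp_add]
  rw [Complex.exp_eq_exp_iff_exists_int]
  refine ⟨(q:ℤ) - 1, ?_⟩
  have hint : (m:ℂ) - n = k + K * ((q:ℤ) - 1) := by
    have hcast : (a:ℤ) = m + K - n := by omega
    have hqa' : (K:ℤ) * q + k = a := by exact_mod_cast hqa
    have h1 : (m:ℤ) - n = k + K * ((q:ℤ) - 1) := by linear_combination -hcast - hqa'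
    exact_mod_cast h1
  have : (starRingEnd ℂ) (((2 * Real.pi * n / K : ℝ)) * Complex.I)
      = -(((2 * Real.pi * n / K : ℝ)) * Complex.I) := by
    rw [map_mul, Complex.conj_I, Complex.conj_ofReal]
    ring
  rw [this]
  push_cast
  field_simp
  linear_combination hint

lemma comp_lt (K : ℕ) (hK : 2 ≤ K) (a b v : ℂ)
    (ha : ∃ m : ℕ, m < K ∧ a = Complex.exp (2 * Real.pi * Complex.I * m / K))
    (hb : ∃ n : ℕ, n < K ∧ b = Complex.exp (2 * Real.pi * Complex.I * n / K))
    (hv : v ≠ 0) (harg : |(v * (starRingEnd ℂ) b).arg| < Real.pi / K) (hab : a ≠ b) :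
    ((starRingEnd ℂ) a * v).re < ((starRingEnd ℂ) b * v).re := by
  obtain ⟨m, hm, rfl⟩ := ha
  obtain ⟨n, hn, rfl⟩ := hb
  have hK0 : 0 < K := by omega
  have hKpos : (0:ℝ) < K := by exact_mod_cast hK0
  have hpi := Real.pi_pos
  have hπK2 : Real.pi / K ≤ Real.pi / 2 := by
    apply div_le_div_of_nonneg_left hpi.le (by norm_num) (by exact_mod_cast hK)
  have hπKpos : 0 < Real.pi / K := by positivity
  set a := Complex.exp (2 * Real.pi * Complex.I * m / K)
  set b := Complex.exp (2 * Real.pi * Complex.I * n / K)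
  have hbabs : ‖b‖ = 1 := root_abs K n hK0
  have haabs : ‖a‖ = 1 := root_abs K m hK0
  have hb0 : b ≠ 0 := by
    intro h; rw [h] at hbabs; simp at hbabs
  have hbb : b * (starRingEnd ℂ) b = 1 := by
    rw [Complex.mul_conj, Complex.normSq_eq_norm_sq, hbabs]
    norm_num
  have haa : (starRingEnd ℂ) a * a = 1 := by
    rw [mul_comm, Complex.mul_conj, Complex.normSq_eq_norm_sq, haabs]
    norm_num
  obtain ⟨k, hk1, hkK, hs⟩ := root_mul_conj K n m hK hn hm (fun h => hab h.symm)
  set z := v * (starRingEnd ℂ) b with hzdef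
  set u := 1 - b * (starRingEnd ℂ) a with hudef
  have hz0 : z ≠ 0 := mul_ne_zero hv (by simpa using hb0)
  have hu0 : u ≠ 0 := by
    rw [hudef, sub_ne_zero]
    intro h
    apply hab
    calc a = 1 * a := (one_mul a).symm
      _ = (b * (starRingEnd ℂ) a) * a := by rw [h]
      _ = b * ((starRingEnd ℂ) a * a) := by ring
      _ = b := by rw [haa, mul_one]
  have hkey : 0 < (z * u).re := by
    apply keyIneq (Real.cos (Real.pi / K)) (Real.sin (Real.pi / K)) ?_ ?_ ?_ z u hz0 hu0 ?_ ?_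
    · exact Real.cos_nonneg_of_mem_Icc ⟨by linarith, hπK2⟩
    · exact Real.sin_pos_of_pos_of_lt_pi hπKpos (by linarith)
    · exact Real.cos_sq_add_sin_sq _
    · exact arg_lt_re _ (by linarith) z hz0 harg
    · rw [hudef, hs]
      exact oneSubRoot K k hK hk1 hkK hKpos (sin_ge K k hK hk1 hkK)
  have hzu : z * u = v * (starRingEnd ℂ) b - v * (starRingEnd ℂ) a := by
    rw [hzdef, hudef]
    linear_combination (-(v * (starRingEnd ℂ) a)) * hbb
  rw [hzu] at hkey
  have h1 : ((starRingEnd ℂ) a * v).re = (v * (starRingEnd ℂ) a).re := by rw [mul_comm]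
  have h2 : ((starRingEnd ℂ) b * v).re = (v * (starRingEnd ℂ) b).re := by rw [mul_comm]
  rw [h1, h2]
  rw [Complex.sub_re] at hkey
  linarith
theorem tessarine_multistate_hopfield_convergence (K : ℕ) (hK : 2 ≤ K)
    (SK : Set ℂ)
    (hSK : SK = {u : ℂ | ∃ k : ℕ, k < K ∧
      u = Complex.exp (2 * Real.pi * Complex.I * k / K)})
    (DK : Set ℂ)
    (hDK : DK = {z : ℂ | z ≠ 0 ∧ ∃ u ∈ SK,
      |(z * (starRingEnd ℂ) u).arg| < Real.pi / K})
    (N : ℕ) (hN : 1 ≤ N)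
    (w : Fin N → Fin N → ℂ × ℂ)
    (hsym : ∀ i j, w i j = tessTau (w j i))
    (hdiag : ∀ i, ∃ r : ℝ, 0 ≤ r ∧ w i i = ((r : ℂ), (0 : ℂ)))
    (σ : ℕ → Fin N) (x : ℕ → Fin N → ℂ × ℂ)
    (hx0 : ∀ i, (x 0 i).1 ∈ SK ∧ (x 0 i).2 ∈ SK)
    (hdyn : ∀ t i,
      ((i = σ t ∧ (∑ j, tessMul (w i j) (x t j)).1 ∈ DK ∧
          (∑ j, tessMul (w i j) (x t j)).2 ∈ DK) →
        ((x (t + 1) i).1 ∈ SK ∧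
          |((∑ j, tessMul (w i j) (x t j)).1 *
            (starRingEnd ℂ) ((x (t + 1) i).1)).arg| < Real.pi / K) ∧
        ((x (t + 1) i).2 ∈ SK ∧
          |((∑ j, tessMul (w i j) (x t j)).2 *
            (starRingEnd ℂ) ((x (t + 1) i).2)).arg| < Real.pi / K)) ∧
      (¬(i = σ t ∧ (∑ j, tessMul (w i j) (x t j)).1 ∈ DK ∧
          (∑ j, tessMul (w i j) (x t j)).2 ∈ DK) →
        x (t + 1) i = x t i)) :
    ∃ T, ∀ t, T ≤ t → x t = x T := by
  classical
  -- state invariant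
  have hmem : ∀ t i, (x t i).1 ∈ SK ∧ (x t i).2 ∈ SK := by
    intro t
    induction t with
    | zero => exact hx0
    | succ t ih =>
      intro i
      by_cases hc : (i = σ t ∧ (∑ j, tessMul (w i j) (x t j)).1 ∈ DK ∧
          (∑ j, tessMul (w i j) (x t j)).2 ∈ DK)
      · obtain ⟨⟨h1, _⟩, ⟨h2, _⟩⟩ := (hdyn t i).1 hc
        exact ⟨h1, h2⟩
      · rw [(hdyn t i).2 hc]; exact ih i
  -- energy
  set E : (Fin N → ℂ × ℂ) → ℝ :=
    fun y => ∑ i, ∑ j, tB (y i) (tessMul (w i j) (y j)) with hE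
  -- single-step dichotomy
  have step : ∀ t, x (t + 1) = x t ∨ E (x t) < E (x (t + 1)) := by
    intro t
    by_cases hc : ((σ t : Fin N) = σ t ∧ (∑ j, tessMul (w (σ t) j) (x t j)).1 ∈ DK ∧
        (∑ j, tessMul (w (σ t) j) (x t j)).2 ∈ DK)
    case neg =>
      left
      funext i
      apply (hdyn t i).2
      rintro ⟨rfl, hrest⟩
      exact hc ⟨rfl, hrest⟩
    case pos =>
      by_cases hba : x (t + 1) (σ t) = x t (σ t)
      · left
        funext i
        by_cases hi : i = σ t
        · rw [hi]; exact hba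
        · exact (hdyn t i).2 (fun h => hi h.1)
      · right
        have hupd : x (t + 1) = Function.update (x t) (σ t) (x (t + 1) (σ t)) := by
          funext i
          by_cases hi : i = σ t
          · rw [hi, Function.update_self]
          · rw [Function.update_of_ne hi]
            exact (hdyn t i).2 (fun h => hi h.1)
        obtain ⟨⟨hb1, harg1⟩, ⟨hb2, harg2⟩⟩ := (hdyn t (σ t)).1 hc
        obtain ⟨r, hr, hwii⟩ := hdiag (σ t)
        obtain ⟨hv1, hv2⟩ := hc.2
        -- nonvanishing of activation components
        have hv1ne : (∑ j, tessMul (w (σ t) j) (x t j)).1 ≠ 0 := by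
          rw [hDK] at hv1; exact hv1.1
        have hv2ne : (∑ j, tessMul (w (σ t) j) (x t j)).2 ≠ 0 := by
          rw [hDK] at hv2; exact hv2.1
        -- componentwise comparison
        have hcomp : ∀ (ac bc vc : ℂ), ac ∈ SK → bc ∈ SK → vc ≠ 0 →
            |(vc * (starRingEnd ℂ) bc).arg| < Real.pi / K →
            ((starRingEnd ℂ) ac * vc).re ≤ ((starRingEnd ℂ) bc * vc).re ∧
              (ac ≠ bc → ((starRingEnd ℂ) ac * vc).re < ((starRingEnd ℂ) bc * vc).re) := by
          intro ac bc vc hac hbc hvc harg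
          by_cases h : ac = bc
          · exact ⟨le_of_eq (by rw [h]), fun hne => absurd h hne⟩
          · rw [hSK] at hac hbc
            have := comp_lt K hK ac bc vc hac hbc hvc harg h
            exact ⟨this.le, fun _ => this⟩
        have hA := hmem t (σ t)
        have hc1 := hcomp ((x t (σ t)).1) ((x (t+1) (σ t)).1)
          ((∑ j, tessMul (w (σ t) j) (x t j)).1) hA.1 hb1 hv1ne harg1
        have hc2 := hcomp ((x t (σ t)).2) ((x (t+1) (σ t)).2)
          ((∑ j, tessMul (w (σ t) j) (x t j)).2) hA.2 hb2 hv2ne harg2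
        -- strictness from hba
        have hne : (x t (σ t)).1 ≠ (x (t+1) (σ t)).1 ∨
            (x t (σ t)).2 ≠ (x (t+1) (σ t)).2 := by
          by_contra h
          push_neg at h
          exact hba (Prod.ext h.1.symm h.2.symm)
        have hBlt : tB (x t (σ t)) (∑ j, tessMul (w (σ t) j) (x t j))
            < tB (x (t+1) (σ t)) (∑ j, tessMul (w (σ t) j) (x t j)) := by
          simp only [tB, Complex.add_re]
          rcases hne with h | h
          · have := hc1.2 h
            linarith [hc2.1]
          · have := hc2.2 h
            linarith [hc1.1]
        -- diagonal bracket
        have hbr : 0 ≤ tB (x (t+1) (σ t)) (tessMul (w (σ t) (σ t)) (x (t+1) (σ t)))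
            + tB (x t (σ t)) (tessMul (w (σ t) (σ t)) (x t (σ t)))
            - 2 * tB (x (t+1) (σ t)) (tessMul (w (σ t) (σ t)) (x t (σ t))) := by
          rw [hwii]
          exact diag_bracket r hr _ _
        -- put together
        have hdf := energy_diff w hsym (x t) (σ t) (x (t+1) (σ t))
        have hEdiff : E (x (t+1)) - E (x t)
            = 2 * (tB (x (t+1) (σ t)) (∑ j, tessMul (w (σ t) j) (x t j))
                - tB (x t (σ t)) (∑ j, tessMul (w (σ t) j) (x t j)))
              + (tB (x (t+1) (σ t)) (tessMul (w (σ t) (σ t)) (x (t+1) (σ t)))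
                + tB (x t (σ t)) (tessMul (w (σ t) (σ t)) (x t (σ t)))
                - 2 * tB (x (t+1) (σ t)) (tessMul (w (σ t) (σ t)) (x t (σ t)))) := by
          rw [hE]
          simp only []
          rw [show (∑ i, ∑ j, tB (x (t+1) i) (tessMul (w i j) (x (t+1) j)))
              = ∑ i, ∑ j, tB (Function.update (x t) (σ t) (x (t+1) (σ t)) i)
                (tessMul (w i j) (Function.update (x t) (σ t) (x (t+1) (σ t)) j)) by
            rw [← hupd]]
          exact hdf
        linarith
  -- monotonicity
  have mono : ∀ s t, s ≤ t → E (x s) ≤ E (x t) := by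
    intro s t hst
    induction t, hst using Nat.le_induction with
    | base => exact le_refl _
    | succ t hst ih =>
      rcases step t with h | h
      · rw [h]; exact ih
      · linarith
  -- finiteness of range of energies along the trajectory
  have hSKfin : SK.Finite := by
    rw [hSK]
    have : {u : ℂ | ∃ k : ℕ, k < K ∧ u = Complex.exp (2 * Real.pi * Complex.I * k / K)}
        = (fun k : ℕ => Complex.exp (2 * Real.pi * Complex.I * k / K)) '' (Set.Iio K) := by
      ext u
      simp [Set.mem_image, eq_comm]
    rw [this]
    exact (Set.finite_Iio K).image _
  have hstatefin : {y : Fin N → ℂ × ℂ | ∀ i, (y i).1 ∈ SK ∧ (y i).2 ∈ SK}.Finite := by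
    apply Set.Finite.subset (Set.Finite.pi (fun _ : Fin N => hSKfin.prod hSKfin))
    intro y hy
    rw [Set.mem_pi]
    intro i _
    exact hy i
  have hrange : (Set.range fun t => E (x t)).Finite := by
    apply Set.Finite.subset (hstatefin.image E)
    rintro _ ⟨t, rfl⟩
    exact ⟨x t, hmem t, rfl⟩
  obtain ⟨M, hM, hmax⟩ := Set.Finite.exists_maximalFor id _ hrange ⟨E (x 0), 0, rfl⟩
  obtain ⟨T, hT⟩ := hM
  refine ⟨T, ?_⟩
  intro t ht
  induction t, ht using Nat.le_induction with
  | base => rfl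
  | succ t ht ih =>
    rcases step t with h | h
    · rw [h, ih]
    · exfalso
      have h1 : M ≤ E (x t) := by
        rw [← hT]
        exact mono T t ht
      have h2 : M = E (x t) := le_antisymm h1 (hmax (j := E (x t)) ⟨t, rfl⟩ h1)
      have h3 : M ≤ E (x (t+1)) := by
        rw [← hT]
        exact mono T (t+1) (by omega)
      have h4 : M = E (x (t+1)) := le_antisymm h3 (hmax (j := E (x (t+1))) ⟨t+1, rfl⟩ h3)
      rw [← h2, ← h4] at h
      exact lt_irrefl M h
end
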